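/- For n ≥ 2, the number of bicolored Motzkin paths of length n satisfying both restrictions — no umber horizontal step at height zero and no denim horizontal step before the first down step — equals the Catalan number C(n-1). -/

import Mathlib

inductive BStep : Type
  | U | D | Hu | Hd
deriving DecidableEq

def BStep.h : BStep → ℤ
  | .U => 1
  | .D => -1
  | .Hu => 0
  | .Hd => 0

/-- The height reached by a path (list of steps). -/
def hsum (p : List BStep) : ℤ := (p.map BStep.h).sum

/-- The path never goes below the x-axis. -/
def NonNegPath (p : List BStep) : Prop := ∀ k : ℕ, 0 ≤ hsum (p.take k)

/-- Restriction (1): no umber horizontal step occurs at height zero. -/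
def Res1 (p : List BStep) : Prop :=
  ∀ (i : ℕ) (hi : i < p.length), p.get ⟨i, hi⟩ = BStep.Hu → 0 < hsum (p.take i)

/-- Restriction (2): no denim horizontal step occurs before the first down step. -/
def Res2 (p : List BStep) : Prop :=
  ∀ (i : ℕ) (hi : i < p.length), p.get ⟨i, hi⟩ = BStep.Hd →
    ∃ (j : ℕ) (hj : j < p.length), j < i ∧ p.get ⟨j, hj⟩ = BStep.D

/-- A bicolored Motzkin path of length `n`: from (0,0) to (n,0), never below the x-axis. -/
def IsBMotzkin (n : ℕ) (p : List BStep) : Prop :=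
  p.length = n ∧ hsum p = 0 ∧ NonNegPath p

/-! ### Auxiliary development -/

instance : Fintype BStep :=
  ⟨{BStep.U, BStep.D, BStep.Hu, BStep.Hd}, fun x => by cases x <;> simp⟩

@[simp] lemma hsum_nil : hsum ([] : List BStep) = 0 := rfl
@[simp] lemma hsum_cons (s : BStep) (t : List BStep) : hsum (s :: t) = s.h + hsum t := by
  simp [hsum]
@[simp] lemma hsum_append (l r : List BStep) : hsum (l ++ r) = hsum l + hsum r := by
  simp [hsum]

lemma h_cases (s : BStep) : s.h = 1 ∨ s.h = 0 ∨ s.h = -1 := by cases s <;> simp [BStep.h]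

lemma hsum_take_succ (p : List BStep) (i : ℕ) (h : i < p.length) :
    hsum (p.take (i+1)) = hsum (p.take i) + (p[i]).h := by
  unfold hsum
  rw [List.map_take, List.map_take, List.sum_take_succ _ i (by simpa using h)]
  simp

/-- height-tracking non-negativity -/
def nn : ℤ → List BStep → Prop
  | _, [] => True
  | c, s :: t => 0 ≤ c + s.h ∧ nn (c + s.h) t

/-- height-tracking restriction 1 -/
def ok1 : ℤ → List BStep → Prop
  | _, [] => True
  | c, s :: t => (s = BStep.Hu → 0 < c) ∧ ok1 (c + s.h) t

/-- seen-a-D-tracking restriction 2 -/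
def ok2 : Prop → List BStep → Prop
  | _, [] => True
  | c, s :: t => (s = BStep.Hd → c) ∧ ok2 (c ∨ s = BStep.D) t

@[simp] lemma nn_nil (c : ℤ) : nn c [] := trivial
@[simp] lemma nn_cons (c : ℤ) (s t) : nn c (s :: t) ↔ 0 ≤ c + s.h ∧ nn (c + s.h) t := Iff.rfl
@[simp] lemma ok1_nil (c : ℤ) : ok1 c [] := trivial
@[simp] lemma ok1_cons (c : ℤ) (s t) :
    ok1 c (s :: t) ↔ (s = BStep.Hu → 0 < c) ∧ ok1 (c + s.h) t := Iff.rfl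
@[simp] lemma ok2_nil (c : Prop) : ok2 c [] := trivial
@[simp] lemma ok2_cons (c : Prop) (s t) :
    ok2 c (s :: t) ↔ (s = BStep.Hd → c) ∧ ok2 (c ∨ s = BStep.D) t := Iff.rfl

lemma nn_iff (c : ℤ) (hc : 0 ≤ c) (p : List BStep) :
    nn c p ↔ ∀ k, 0 ≤ c + hsum (p.take k) := by
  induction p generalizing c with
  | nil => simp [hc]
  | cons s t ih =>
    simp only [nn_cons]
    constructor
    · rintro ⟨h0, h1⟩ k
      cases k with
      | zero => simpa using hc
      | succ k =>
        have := (ih _ h0).mp h1 k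
        simpa [add_assoc] using this
    · intro h
      have h0 : 0 ≤ c + s.h := by simpa using h 1
      refine ⟨h0, (ih _ h0).mpr fun k => ?_⟩
      have := h (k+1)
      simpa [add_assoc] using this

lemma NonNegPath_iff_nn (p : List BStep) : NonNegPath p ↔ nn 0 p := by
  rw [nn_iff 0 le_rfl]
  unfold NonNegPath
  simp

lemma nn_mono {c c' : ℤ} (h : c ≤ c') {p : List BStep} (hp : nn c p) : nn c' p := by
  induction p generalizing c c' with
  | nil => trivial
  | cons s t ih =>
    obtain ⟨h0, h1⟩ := hp
    exact ⟨le_trans h0 (by linarith), ih (by linarith) h1⟩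

lemma ok1_of_nn {c : ℤ} (hc : 0 ≤ c) {p : List BStep} (hp : nn c p) : ok1 (c+1) p := by
  induction p generalizing c with
  | nil => trivial
  | cons s t ih =>
    obtain ⟨h0, h1⟩ := hp
    exact ⟨fun _ => by linarith, by simpa [add_assoc, add_comm, add_left_comm] using ih h0 h1⟩

lemma ok2_congr {c c' : Prop} (h : c ↔ c') (p : List BStep) : ok2 c p ↔ ok2 c' p := by
  induction p generalizing c c' with
  | nil => simp
  | cons s t ih =>
    simp only [ok2_cons]
    rw [ih (by tauto : (c ∨ s = BStep.D) ↔ (c' ∨ s = BStep.D))]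
    tauto

lemma ok2_true {c : Prop} (hc : c) (p : List BStep) : ok2 c p := by
  induction p generalizing c with
  | nil => trivial
  | cons s t ih => exact ⟨fun _ => hc, ih (Or.inl hc)⟩

lemma nn_append (c : ℤ) (l r : List BStep) :
    nn c (l ++ r) ↔ nn c l ∧ nn (c + hsum l) r := by
  induction l generalizing c with
  | nil => simp
  | cons s t ih => simp [ih, add_assoc, and_assoc]

lemma ok1_append (c : ℤ) (l r : List BStep) :
    ok1 c (l ++ r) ↔ ok1 c l ∧ ok1 (c + hsum l) r := by
  induction l generalizing c with
  | nil => simp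
  | cons s t ih => simp [ih, add_assoc, and_assoc]

lemma ok2_append (c : Prop) (l r : List BStep) :
    ok2 c (l ++ r) ↔ ok2 c l ∧ ok2 (c ∨ BStep.D ∈ l) r := by
  induction l generalizing c with
  | nil => simpa using (ok2_congr (by simp) r).symm
  | cons s t ih =>
    simp only [List.cons_append, ok2_cons, ih, List.mem_cons]
    rw [ok2_congr (show ((c ∨ s = BStep.D) ∨ BStep.D ∈ t) ↔ (c ∨ (s = BStep.D ∨ BStep.D ∈ t)) by
      constructor <;> intro h <;> [tauto; tauto]) r]
    constructor
    · rintro ⟨a, b, d⟩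
      refine ⟨⟨a, b⟩, ?_⟩
      apply (ok2_congr ?_ r).mp d
      constructor <;> intro h <;> [tauto; tauto]
    · rintro ⟨⟨a, b⟩, d⟩
      refine ⟨a, b, (ok2_congr ?_ r).mp d⟩
      constructor <;> intro h <;> [tauto; tauto]
lemma ok1_iff (c : ℤ) (p : List BStep) :
    ok1 c p ↔ ∀ (i : ℕ) (hi : i < p.length), p[i] = BStep.Hu → 0 < c + hsum (p.take i) := by
  induction p generalizing c with
  | nil => simp
  | cons s t ih =>
    simp only [ok1_cons, ih]
    constructor
    · rintro ⟨h0, h1⟩ i hi hu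
      cases i with
      | zero => simpa using h0 (by simpa using hu)
      | succ i =>
        have := h1 i (by simpa using hi) (by simpa using hu)
        simpa [add_assoc] using this
    · intro h
      refine ⟨fun hs => by simpa using h 0 (by simp) (by simpa using hs), fun i hi hu => ?_⟩
      have := h (i+1) (by simpa using hi) (by simpa using hu)
      simpa [add_assoc] using this

lemma Res1_iff_ok1 (p : List BStep) : Res1 p ↔ ok1 0 p := by
  rw [ok1_iff]
  unfold Res1
  simp [List.get_eq_getElem]

lemma ok2_iff (c : Prop) (p : List BStep) :
    ok2 c p ↔ ∀ (i : ℕ) (hi : i < p.length), p[i] = BStep.Hd →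
      (c ∨ ∃ j, ∃ _ : j < p.length, j < i ∧ p[j] = BStep.D) := by
  induction p generalizing c with
  | nil => simp
  | cons s t ih =>
    simp only [ok2_cons, ih]
    constructor
    · rintro ⟨h0, h1⟩ i hi hd
      cases i with
      | zero => exact Or.inl (h0 (by simpa using hd))
      | succ i =>
        rcases h1 i (by simpa using hi) (by simpa using hd) with hc | ⟨j, hj, hji, hD⟩
        · rcases hc with hc | hc
          · exact Or.inl hc
          · exact Or.inr ⟨0, by simp, by omega, by simpa using hc⟩
        · exact Or.inr ⟨j+1, by simpa using hj, by omega, by simpa using hD⟩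
    · intro h
      constructor
      · intro hs
        rcases h 0 (by simp) (by simpa using hs) with hc | ⟨j, hj, hji, _⟩
        · exact hc
        · omega
      · intro i hi hd
        rcases h (i+1) (by simpa using hi) (by simpa using hd) with hc | ⟨j, hj, hji, hD⟩
        · exact Or.inl (Or.inl hc)
        · cases j with
          | zero => exact Or.inl (Or.inr (by simpa using hD))
          | succ j => exact Or.inr ⟨j, by simpa using hj, by omega, by simpa using hD⟩

lemma Res2_iff_ok2 (p : List BStep) : Res2 p ↔ ok2 False p := by
  rw [ok2_iff]
  unfold Res2
  try simp only [List.get_eq_getElem, false_or]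
  try (constructor
       · intro h i hi hd
         obtain ⟨j, hj, hji, hD⟩ := h i hi hd
         exact ⟨j, hj, hji, hD⟩
       · intro h i hi hd
         obtain ⟨j, hj, hji, hD⟩ := h i hi hd
         exact ⟨j, hj, hji, hD⟩)

/-! ### Core and transfer lemmas -/

def Core (p : List BStep) : Prop := hsum p = 0 ∧ nn 0 p

lemma core_UaDb {a b : List BStep} (ha : Core a) (hb : Core b) :
    Core (BStep.U :: a ++ BStep.D :: b) := by
  obtain ⟨ha1, ha2⟩ := ha
  obtain ⟨hb1, hb2⟩ := hb
  constructor
  · simp [BStep.h, ha1, hb1]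
  · simp only [List.cons_append, nn_cons, nn_append, BStep.h]
    refine ⟨by norm_num, ?_, ?_⟩
    · exact nn_mono (by norm_num) ha2
    · simp only [ha1, nn_cons, BStep.h]
      norm_num
      exact hb2

lemma ok1_UaDb {a b : List BStep} (ha : Core a) :
    ok1 0 (BStep.U :: a ++ BStep.D :: b) ↔ ok1 0 b := by
  obtain ⟨ha1, ha2⟩ := ha
  have e1 : (0:ℤ) + BStep.U.h = 1 := by norm_num [BStep.h]
  have e2 : (1:ℤ) + hsum a = 1 := by rw [ha1]; ring
  have e3 : (1:ℤ) + BStep.D.h = 0 := by norm_num [BStep.h]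
  simp only [List.cons_append, ok1_cons, ok1_append, e1, e2, e3]
  constructor
  · rintro ⟨-, -, -, h⟩; exact h
  · intro h
    exact ⟨by simp, ok1_of_nn le_rfl ha2, by simp, h⟩

lemma ok2_UaDb {a b : List BStep} :
    ok2 False (BStep.U :: a ++ BStep.D :: b) ↔ ok2 False a := by
  simp only [List.cons_append, ok2_cons, ok2_append]
  constructor
  · rintro ⟨-, h2, -⟩
    exact (ok2_congr (by simp) a).mp h2
  · intro h
    refine ⟨by simp, (ok2_congr (by simp) a).mp h, ?_, ?_⟩
    · simp
    · exact ok2_true (by tauto) b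

lemma ok1_cons_Hd (q : List BStep) : ok1 0 (BStep.Hd :: q) ↔ ok1 0 q := by
  simp [BStep.h]

lemma ok1_cons_Hu (q : List BStep) : ¬ ok1 0 (BStep.Hu :: q) := by
  simp [BStep.h]

lemma ok2_cons_Hu (q : List BStep) : ok2 False (BStep.Hu :: q) ↔ ok2 False q := by
  simp only [ok2_cons]
  rw [ok2_congr (by simp : (False ∨ (BStep.Hu = BStep.D)) ↔ False)]
  simp

lemma ok2_cons_Hd (q : List BStep) : ¬ ok2 False (BStep.Hd :: q) := by
  simp

lemma core_cons_H {s : BStep} (hs : s.h = 0) (q : List BStep) :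
    Core (s :: q) ↔ Core q := by
  unfold Core
  simp [hs]

lemma not_core_cons_D (q : List BStep) : ¬ Core (BStep.D :: q) := by
  rintro ⟨-, h2, -⟩
  simp [BStep.h] at h2
/-! ### First-return decomposition -/

lemma nn_take {p : List BStep} (h : nn 0 p) (k : ℕ) : 0 ≤ hsum (p.take k) := by
  have := (nn_iff 0 le_rfl p).mp h k
  simpa using this

lemma decompose_exists {q : List BStep} (hq : hsum q = -1) (hnn : nn 1 q) :
    ∃ a b, q = a ++ BStep.D :: b ∧ Core a ∧ Core b := by
  have key : ∀ k, -1 ≤ hsum (q.take k) := by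
    intro k
    have := (nn_iff 1 (by norm_num) q).mp hnn k
    linarith
  have hex : ∃ k, hsum (q.take k) = -1 := ⟨q.length, by simpa using hq⟩
  classical
  obtain ⟨k₀, hk₀, hmin, hk₀le⟩ :
      ∃ k, hsum (q.take k) = -1 ∧ (∀ m < k, hsum (q.take m) ≠ -1) ∧ k ≤ q.length :=
    ⟨Nat.find hex, Nat.find_spec hex, fun m hm => Nat.find_min hex hm,
      Nat.find_le (by simpa using hq)⟩
  have hpos : ∀ m < k₀, 0 ≤ hsum (q.take m) := by
    intro m hm
    have h1 := key m
    have h2 := hmin m hm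
    omega
  have hk₀pos : 0 < k₀ := by
    rcases Nat.eq_zero_or_pos k₀ with h | h
    · exfalso; rw [h] at hk₀; simp at hk₀
    · exact h
  obtain ⟨j, rfl⟩ : ∃ j, k₀ = j + 1 := ⟨k₀ - 1, by omega⟩
  have hjlen : j < q.length := by omega
  have hstep : hsum (q.take (j+1)) = hsum (q.take j) + (q[j]).h := hsum_take_succ q j hjlen
  have hj0 : hsum (q.take j) = 0 := by
    have h1 := hpos j (by omega)
    have h2 := h_cases (q[j])
    omega
  have hD : q[j] = BStep.D := by
    have : (q[j]).h = -1 := by omega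
    cases hqq : q[j] <;> rw [hqq] at this <;> simp [BStep.h] at this ⊢
  refine ⟨q.take j, q.drop (j+1), ?_, ⟨hj0, ?_⟩, ⟨?_, ?_⟩⟩
  · conv_lhs => rw [← List.take_append_drop j q]
    rw [List.drop_eq_getElem_cons hjlen, hD]
  · rw [nn_iff 0 le_rfl]
    intro k
    rw [List.take_take]
    rcases le_or_gt j k with h | h
    · rw [min_eq_right h]
      simp [hj0]
    · rw [min_eq_left h.le]
      simpa using hpos k (by omega)
  · have := List.take_append_drop (j+1) q
    have h2 : hsum q = hsum (q.take (j+1)) + hsum (q.drop (j+1)) := by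
      conv_lhs => rw [← this]
      rw [hsum_append]
    rw [hq, hk₀] at h2
    linarith
  · rw [nn_iff 0 le_rfl]
    intro k
    have e : q.take (j+1+k) = q.take (j+1) ++ (q.drop (j+1)).take k := List.take_add
    have : hsum (q.take (j+1+k)) = -1 + hsum ((q.drop (j+1)).take k) := by
      rw [e, hsum_append, hk₀]
    have hk := key (j+1+k)
    linarith

lemma decompose_unique {a₁ b₁ a₂ b₂ : List BStep}
    (h : a₁ ++ BStep.D :: b₁ = a₂ ++ BStep.D :: b₂)
    (ha₁ : Core a₁) (ha₂ : Core a₂) : a₁ = a₂ ∧ b₁ = b₂ := by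
  have hlen : a₁.length = a₂.length := by
    by_contra hne
    -- wlog via helper
    have key : ∀ (x₁ y₁ x₂ y₂ : List BStep), x₁ ++ BStep.D :: y₁ = x₂ ++ BStep.D :: y₂ →
        Core x₁ → Core x₂ → x₁.length < x₂.length → False := by
      intro x₁ y₁ x₂ y₂ heq hc₁ hc₂ hlt
      have h1 : hsum ((x₁ ++ BStep.D :: y₁).take (x₁.length + 1)) = -1 := by
        rw [List.take_append]
        simp [hc₁.1, BStep.h, List.take_of_length_le (Nat.le_succ _)]
      have h2 : (x₂ ++ BStep.D :: y₂).take (x₁.length + 1) = x₂.take (x₁.length + 1) := by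
        rw [List.take_append_of_le_length (by omega)]
      have h3 : 0 ≤ hsum (x₂.take (x₁.length + 1)) := nn_take hc₂.2 _
      rw [heq, h2] at h1
      omega
    rcases Nat.lt_or_ge a₁.length a₂.length with hlt | hge
    · exact key a₁ b₁ a₂ b₂ h ha₁ ha₂ hlt
    · exact key a₂ b₂ a₁ b₁ h.symm ha₂ ha₁ (by omega)
  obtain ⟨e1, e2⟩ := List.append_inj h hlen
  exact ⟨e1, by simpa using e2⟩
/-! ### Counting setup -/

def allLists : ℕ → Finset (List BStep)
  | 0 => {[]}
  | n+1 => ((Finset.univ : Finset BStep) ×ˢ allLists n).image fun x => x.1 :: x.2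

lemma mem_allLists (p : List BStep) (n : ℕ) : p ∈ allLists n ↔ p.length = n := by
  induction n generalizing p with
  | zero => cases p <;> simp [allLists]
  | succ n ih =>
    cases p with
    | nil => simp [allLists]
    | cons s t =>
      simp [allLists, ih]

open Classical in
noncomputable def fcnt (n : ℕ) (Q : List BStep → Prop) : ℕ :=
  ((allLists n).filter Q).card

open Classical in
lemma mem_fcnt_filter {n : ℕ} {Q : List BStep → Prop} {p : List BStep} :
    p ∈ (allLists n).filter Q ↔ p.length = n ∧ Q p := by
  rw [Finset.mem_filter, mem_allLists]

lemma fcnt_congr (n : ℕ) (Q Q' : List BStep → Prop)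
    (h : ∀ p, p.length = n → (Q p ↔ Q' p)) : fcnt n Q = fcnt n Q' := by
  classical
  unfold fcnt
  congr 1
  apply Finset.filter_congr
  intro p hp
  rw [mem_allLists] at hp
  simp [h p hp]

lemma fcnt_zero (Q : List BStep → Prop) (h : Q []) : fcnt 0 Q = 1 := by
  classical
  unfold fcnt
  have : (allLists 0).filter Q = {[]} := by
    ext p
    rw [mem_fcnt_filter]
    simp only [Finset.mem_singleton, List.length_eq_zero_iff]
    constructor
    · rintro ⟨rfl, -⟩; rfl
    · rintro rfl; exact ⟨rfl, h⟩
  rw [this, Finset.card_singleton]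

lemma fcnt_zero' (Q : List BStep → Prop) (h : ¬ Q []) : fcnt 0 Q = 0 := by
  classical
  unfold fcnt
  rw [Finset.card_eq_zero]
  ext p
  rw [mem_fcnt_filter]
  simp only [Finset.notMem_empty, iff_false, not_and, List.length_eq_zero_iff]
  rintro rfl
  exact h

/-- Split a counted family by head symbol. -/
lemma split_head (n : ℕ) (E : List BStep → Prop) :
    fcnt (n+1) (fun p => Core p ∧ E p) =
      fcnt (n+1) (fun p => (Core p ∧ E p) ∧ p.head? = some BStep.U)
      + fcnt (n+1) (fun p => (Core p ∧ E p) ∧ p.head? = some BStep.Hu)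
      + fcnt (n+1) (fun p => (Core p ∧ E p) ∧ p.head? = some BStep.Hd) := by
  classical
  unfold fcnt
  rw [Finset.card_eq_sum_card_fiberwise
    (f := fun p : List BStep => p.head?)
    (t := {some BStep.U, some BStep.Hu, some BStep.Hd})]
  · rw [Finset.sum_insert (by simp), Finset.sum_insert (by simp), Finset.sum_singleton,
      ← Nat.add_assoc]
    congr 1
    · congr 1
      · exact congrArg Finset.card (Finset.ext fun p => by
          simp only [Finset.mem_filter]; tauto)
      · exact congrArg Finset.card (Finset.ext fun p => by
          simp only [Finset.mem_filter]; tauto)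
    · exact congrArg Finset.card (Finset.ext fun p => by
        simp only [Finset.mem_filter]; tauto)
  · intro p hp
    rw [Finset.mem_coe, mem_fcnt_filter] at hp
    obtain ⟨hlen, ⟨-, hnn⟩, -⟩ := hp
    cases p with
    | nil => simp at hlen
    | cons s t =>
      cases s with
      | U => simp
      | Hu => simp
      | Hd => simp
      | D =>
        exfalso
        obtain ⟨h0, -⟩ := hnn
        simp [BStep.h] at h0

/-- Counting paths with a fixed zero-height head step. -/
lemma cnt_cons (n : ℕ) (s : BStep) (Q Q' : List BStep → Prop)
    (h : ∀ q, q.length = n → (Q (s :: q) ↔ Q' q)) :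
    fcnt (n+1) (fun p => Q p ∧ p.head? = some s) = fcnt n Q' := by
  classical
  unfold fcnt
  apply Finset.card_nbij' (i := fun p => p.tail) (j := fun q => s :: q)
  · intro p hp
    rw [Finset.mem_coe, mem_fcnt_filter] at hp
    obtain ⟨hlen, hQ, hhead⟩ := hp
    cases p with
    | nil => simp at hhead
    | cons a t =>
      simp only [List.head?_cons, Option.some.injEq] at hhead
      subst hhead
      rw [Finset.mem_coe, mem_fcnt_filter]
      have hlt : t.length = n := by simpa using hlen
      exact ⟨hlt, (h t hlt).mp hQ⟩
  · intro q hq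
    rw [Finset.mem_coe, mem_fcnt_filter] at hq
    obtain ⟨hlen, hQ⟩ := hq
    rw [Finset.mem_coe, mem_fcnt_filter]
    exact ⟨by simp [hlen], (h q hlen).mpr hQ, rfl⟩
  · intro p hp
    rw [Finset.mem_coe, mem_fcnt_filter] at hp
    obtain ⟨-, -, hhead⟩ := hp
    cases p with
    | nil => simp at hhead
    | cons a t => simp only [List.head?_cons, Option.some.injEq] at hhead; rw [hhead]; rfl
  · intro q hq
    rfl

lemma fcnt_eq_card (m : ℕ) (Q : List BStep → Prop) (inst : DecidablePred Q) :
    (@Finset.filter _ Q inst (allLists m)).card = fcnt m Q := by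
  classical
  unfold fcnt
  refine congrArg Finset.card (Finset.ext fun p => ?_)
  constructor
  · intro h
    exact (@Finset.mem_filter _ _ (fun a => Classical.propDecidable (Q a)) _ _).mpr
      ((@Finset.mem_filter _ _ inst _ _).mp h)
  · intro h
    exact (@Finset.mem_filter _ _ inst _ _).mpr
      ((@Finset.mem_filter _ _ (fun a => Classical.propDecidable (Q a)) _ _).mp h)
/-! ### The U-a-D-b piece -/

lemma cnt_UD (n : ℕ) (E Ea Eb : List BStep → Prop)
    (hE : ∀ a b : List BStep, Core a → Core b →
      (E (BStep.U :: a ++ BStep.D :: b) ↔ Ea a ∧ Eb b)) :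
    fcnt (n+1) (fun p => (Core p ∧ E p) ∧ p.head? = some BStep.U) =
      ∑ i ∈ Finset.range n,
        fcnt i (fun a => Core a ∧ Ea a) * fcnt (n-1-i) (fun b => Core b ∧ Eb b) := by
  classical
  have hcard : ∀ i, fcnt i (fun a => Core a ∧ Ea a) * fcnt (n-1-i) (fun b => Core b ∧ Eb b)
      = (((allLists i).filter (fun a => Core a ∧ Ea a)) ×ˢ
         ((allLists (n-1-i)).filter (fun b => Core b ∧ Eb b))).card := by
    intro i
    rw [Finset.card_product, fcnt_eq_card, fcnt_eq_card]
  rw [Finset.sum_congr rfl (fun i _ => hcard i), ← Finset.card_sigma]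
  refine (Finset.card_bij
    (i := fun (x : Σ _ : ℕ, List BStep × List BStep) _ => BStep.U :: x.2.1 ++ BStep.D :: x.2.2)
    ?_ ?_ ?_).symm
  · rintro ⟨i, a, b⟩ hx
    simp only [Finset.mem_sigma, Finset.mem_range, Finset.mem_product, Finset.mem_filter,
      mem_allLists] at hx
    obtain ⟨hi, ⟨hal, haC, haE⟩, ⟨hbl, hbC, hbE⟩⟩ := hx
    rw [mem_fcnt_filter]
    refine ⟨?_, ⟨core_UaDb haC hbC, (hE a b haC hbC).mpr ⟨haE, hbE⟩⟩, rfl⟩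
    simp only [List.cons_append, List.length_cons, List.length_append, List.length_cons, hal, hbl]
    omega
  · rintro ⟨i₁, a₁, b₁⟩ h₁ ⟨i₂, a₂, b₂⟩ h₂ heq
    simp only [Finset.mem_sigma, Finset.mem_range, Finset.mem_product, Finset.mem_filter,
      mem_allLists] at h₁ h₂
    simp only [List.cons_append, List.cons.injEq, true_and] at heq
    obtain ⟨e1, e2⟩ := decompose_unique heq h₁.2.1.2.1 h₂.2.1.2.1
    have e0 : i₁ = i₂ := by
      have := h₁.2.1.1
      have := h₂.2.1.1
      subst e1; omega
    subst e0; subst e1; subst e2; rfl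
  · intro p hp
    rw [mem_fcnt_filter] at hp
    obtain ⟨hlen, ⟨⟨hs, hn⟩, hEp⟩, hhead⟩ := hp
    cases p with
    | nil => simp at hhead
    | cons s q =>
      simp only [List.head?_cons, Option.some.injEq] at hhead
      subst hhead
      obtain ⟨hq0, hqn⟩ : hsum q = -1 ∧ nn 1 q := by
        rw [hsum_cons] at hs
        rw [nn_cons] at hn
        constructor
        · simp [BStep.h] at hs; linarith
        · have := hn.2; simpa [BStep.h] using this
      obtain ⟨a, b, rfl, haC, hbC⟩ := decompose_exists hq0 hqn
      obtain ⟨hEa, hEb⟩ := (hE a b haC hbC).mp (by simpa using hEp)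
      refine ⟨⟨a.length, a, b⟩, ?_, rfl⟩
      simp only [Finset.mem_sigma, Finset.mem_range, Finset.mem_product, Finset.mem_filter,
        mem_allLists]
      have hl : a.length + b.length + 2 = n + 1 := by
        simp only [List.cons_append, List.length_cons, List.length_append] at hlen; omega
      exact ⟨by omega, ⟨trivial, haC, hEa⟩, ⟨by omega, hbC, hEb⟩⟩
/-! ### The four families -/

def QM : List BStep → Prop := fun p => Core p ∧ True
def QS : List BStep → Prop := fun p => Core p ∧ ok2 False p
def QR : List BStep → Prop := fun p => Core p ∧ ok1 0 p
def QF : List BStep → Prop := fun p => Core p ∧ (ok1 0 p ∧ ok2 False p)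

lemma fcnt_false (n : ℕ) : fcnt n (fun _ => False) = 0 := by
  classical
  unfold fcnt
  rw [Finset.card_eq_zero]
  ext p
  rw [mem_fcnt_filter]
  simp

lemma core_nil : Core ([] : List BStep) := ⟨rfl, trivial⟩

lemma catalan_rec (n : ℕ) :
    catalan (n+1) = ∑ i ∈ Finset.range (n+1), catalan i * catalan (n-i) := by
  rw [catalan_succ, ← Fin.sum_univ_eq_sum_range]

lemma vM : ∀ n, fcnt n QM = catalan (n+1) := by
  intro n
  induction n using Nat.strong_induction_on with
  | _ n IH =>
    match n with
    | 0 => rw [fcnt_zero QM ⟨core_nil, trivial⟩, catalan_one]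
    | n+1 =>
      rw [show QM = fun p => Core p ∧ True from rfl, split_head]
      rw [cnt_UD n _ (fun _ => True) (fun _ => True) (fun a b _ _ => by simp)]
      rw [cnt_cons n BStep.Hu _ QM
        (fun q hq => by rw [core_cons_H (by rfl)]; exact Iff.rfl)]
      rw [cnt_cons n BStep.Hd _ QM
        (fun q hq => by rw [core_cons_H (by rfl)]; exact Iff.rfl)]
      have hsum_eq : ∑ i ∈ Finset.range n,
          fcnt i (fun a => Core a ∧ True) * fcnt (n-1-i) (fun b => Core b ∧ True)
          = ∑ i ∈ Finset.range n, catalan (i+1) * catalan (n-i) := by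
        refine Finset.sum_congr rfl fun i hi => ?_
        rw [Finset.mem_range] at hi
        rw [show (fun a => Core a ∧ True) = QM from rfl, IH i (by omega),
          IH (n-1-i) (by omega)]
        congr 2
        omega
      rw [hsum_eq, IH n (by omega)]
      rw [catalan_rec (n+1), Finset.sum_range_succ, Finset.sum_range_succ']
      have e1 : ∀ i ∈ Finset.range n,
          catalan (i+1) * catalan (n+1-(i+1)) = catalan (i+1) * catalan (n-i) :=
        fun i hi => by congr 2; omega
      rw [Finset.sum_congr rfl e1]
      simp [catalan_zero]
      try omega

lemma vS : ∀ n, fcnt n QS = catalan n := by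
  intro n
  induction n using Nat.strong_induction_on with
  | _ n IH =>
    match n with
    | 0 => rw [fcnt_zero QS ⟨core_nil, trivial⟩, catalan_zero]
    | n+1 =>
      rw [show QS = fun p => Core p ∧ ok2 False p from rfl, split_head]
      rw [cnt_UD n _ (fun a => ok2 False a) (fun _ => True)
        (fun a b _ _ => by rw [ok2_UaDb]; tauto)]
      rw [cnt_cons n BStep.Hu _ QS (fun q hq => by
        unfold QS
        rw [core_cons_H (by rfl), ok2_cons_Hu])]
      rw [cnt_cons n BStep.Hd _ (fun _ => False) (fun q hq => by
        simp [ok2_cons_Hd q])]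
      rw [fcnt_false]
      have hsum_eq : ∑ i ∈ Finset.range n,
          fcnt i (fun a => Core a ∧ ok2 False a) * fcnt (n-1-i) (fun b => Core b ∧ True)
          = ∑ i ∈ Finset.range n, catalan i * catalan (n-i) := by
        refine Finset.sum_congr rfl fun i hi => ?_
        rw [Finset.mem_range] at hi
        rw [show (fun a => Core a ∧ ok2 False a) = QS from rfl, IH i (by omega),
          show (fun b => Core b ∧ True) = QM from rfl, vM (n-1-i)]
        congr 2
        omega
      rw [hsum_eq, IH n (by omega)]
      rw [catalan_rec n, Finset.sum_range_succ]
      simp [catalan_zero]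
      try omega

lemma vR : ∀ n, fcnt n QR = catalan n := by
  intro n
  induction n using Nat.strong_induction_on with
  | _ n IH =>
    match n with
    | 0 => rw [fcnt_zero QR ⟨core_nil, trivial⟩, catalan_zero]
    | n+1 =>
      rw [show QR = fun p => Core p ∧ ok1 0 p from rfl, split_head]
      rw [cnt_UD n _ (fun _ => True) (fun b => ok1 0 b)
        (fun a b ha _ => by rw [ok1_UaDb ha]; tauto)]
      rw [cnt_cons n BStep.Hu _ (fun _ => False) (fun q hq => by
        simp [ok1_cons_Hu q])]
      rw [cnt_cons n BStep.Hd _ QR (fun q hq => by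
        unfold QR
        rw [core_cons_H (by rfl), ok1_cons_Hd])]
      rw [fcnt_false]
      have hsum_eq : ∑ i ∈ Finset.range n,
          fcnt i (fun a => Core a ∧ True) * fcnt (n-1-i) (fun b => Core b ∧ ok1 0 b)
          = ∑ i ∈ Finset.range n, catalan (i+1) * catalan (n-1-i) := by
        refine Finset.sum_congr rfl fun i hi => ?_
        rw [show (fun a => Core a ∧ True) = QM from rfl, vM i,
          show (fun b => Core b ∧ ok1 0 b) = QR from rfl, IH (n-1-i) (by omega)]
      rw [hsum_eq, IH n (by omega)]
      rw [catalan_rec n, Finset.sum_range_succ']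
      have e1 : ∀ i ∈ Finset.range n,
          catalan (i+1) * catalan (n-(i+1)) = catalan (i+1) * catalan (n-1-i) :=
        fun i hi => by congr 2; omega
      rw [Finset.sum_congr rfl e1]
      simp [catalan_zero]
      try omega

lemma vF (m : ℕ) : fcnt (m+2) QF = catalan (m+1) := by
  rw [show QF = fun p => Core p ∧ (ok1 0 p ∧ ok2 False p) from rfl, split_head]
  rw [cnt_UD (m+1) _ (fun a => ok2 False a) (fun b => ok1 0 b)
    (fun a b ha _ => by rw [ok1_UaDb ha, ok2_UaDb]; tauto)]
  rw [cnt_cons (m+1) BStep.Hu _ (fun _ => False) (fun q hq => by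
    simp [ok1_cons_Hu q])]
  rw [cnt_cons (m+1) BStep.Hd _ (fun _ => False) (fun q hq => by
    simp [ok2_cons_Hd q])]
  rw [fcnt_false]
  have hsum_eq : ∑ i ∈ Finset.range (m+1),
      fcnt i (fun a => Core a ∧ ok2 False a) * fcnt (m+1-1-i) (fun b => Core b ∧ ok1 0 b)
      = ∑ i ∈ Finset.range (m+1), catalan i * catalan (m-i) := by
    refine Finset.sum_congr rfl fun i hi => ?_
    rw [show (fun a => Core a ∧ ok2 False a) = QS from rfl, vS i,
      show (fun b => Core b ∧ ok1 0 b) = QR from rfl, vR (m+1-1-i)]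
    have e : m+1-1-i = m-i := by omega
    rw [e]
  rw [hsum_eq, ← catalan_rec m]
  try omega
theorem bicolored_motzkin_res12_count (n : ℕ) (hn : 2 ≤ n) :
    Nat.card {p : List BStep // IsBMotzkin n p ∧ Res1 p ∧ Res2 p} = catalan (n - 1) := by
  classical
  obtain ⟨m, rfl⟩ : ∃ m, n = m + 2 := ⟨n - 2, by omega⟩
  have hiff : ∀ p : List BStep,
      (IsBMotzkin (m+2) p ∧ Res1 p ∧ Res2 p) ↔ p ∈ (allLists (m+2)).filter QF := by
    intro p
    rw [mem_fcnt_filter]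
    unfold IsBMotzkin QF Core
    rw [NonNegPath_iff_nn, Res1_iff_ok1, Res2_iff_ok2]
    tauto
  rw [Nat.card_congr (Equiv.subtypeEquivRight hiff), Nat.card_eq_finsetCard]
  have : ((allLists (m+2)).filter QF).card = fcnt (m+2) QF := rfl
  rw [this, vF m, show m + 2 - 1 = m + 1 from rfl]
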